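/- Let (X, X) and (Y, Y) be continuous biframe Bessel mappings for H with Bessel bounds D₁ and D₂ respectively, and let m : Ω → ℂ be an essentially bounded measurable function. Then for all f, g ∈ H, ‖∫_Ω m(ω)·⟨f, X(ω)⟩⟨Y(ω), g⟩ dμ(ω)‖ ≤ ‖m‖_∞·√(D₁ D₂)·‖f‖·‖g‖; consequently the continuous biframe Bessel multiplier M_{m,X,Y} is a well-defined bounded operator with ‖M_{m,X,Y}‖ ≤ ‖m‖_∞·√(D₁ D₂). -/

import Mathlib

open MeasureTheory

section StarModuleDeriv

variable {𝒜 : Type*} [NormedRing 𝒜] [StarRing 𝒜] [CStarRing 𝒜] [NormedAlgebra ℂ 𝒜]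

lemma aux_star_real_smul (r : ℝ) (a : 𝒜) : star ((r : ℂ) • a) = (r : ℂ) • star a := by
  have key : Set.EqOn (fun s : ℝ => star ((s : ℂ) • a)) (fun s : ℝ => (s : ℂ) • star a)
      (Set.range ((↑) : ℚ → ℝ)) := by
    rintro _ ⟨q, rfl⟩
    have h1 : ((q : ℝ) : ℂ) = (q : ℂ) := by push_cast; ring
    simp only [h1]
    exact star_ratCast_smul q a
  have hc1 : Continuous fun s : ℝ => star ((s : ℂ) • a) :=
    (Complex.continuous_ofReal.smul continuous_const).star
  have hc2 : Continuous fun s : ℝ => (s : ℂ) • star a :=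
    Complex.continuous_ofReal.smul continuous_const
  have := Continuous.ext_on Rat.denseRange_cast hc1 hc2 key
  exact congrFun this r

variable [PartialOrder 𝒜] [StarOrderedRing 𝒜]

lemma aux_star_I_smul (a : 𝒜) : star (Complex.I • a) = -(Complex.I • star a) := by
  set j : 𝒜 := Complex.I • (1 : 𝒜) with hj
  have hcomm : ∀ x : 𝒜, j * x = x * j := fun x => by
    rw [hj, smul_mul_assoc, one_mul, mul_smul_comm, mul_one]
  have hj2 : j * j = -(1 : 𝒜) := by
    rw [hj, smul_mul_assoc, one_mul, smul_smul, Complex.I_mul_I, neg_smul, one_smul]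
  have hsj2 : star j * star j = -(1 : 𝒜) := by
    rw [← star_mul, hj2, star_neg, star_one]
  have hu : star j * j = j * star j := (hcomm (star j)).symm
  set v : 𝒜 := j + star j with hv
  have hvsa : star v = v := by rw [hv, star_add, star_star, add_comm]
  have hv2 : v * v = j * star j + j * star j - (1 + 1) := by
    rw [hv, add_mul, mul_add, mul_add, hj2, hsj2, hu]; abel
  have h1 : 0 ≤ v * v := by
    have := star_mul_self_nonneg v; rwa [hvsa] at this
  have hs2 : (j * star j - 1) * (j * star j - 1) = -(v * v) := by
    have e1 : j * star j * (j * star j) = 1 := by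
      calc j * star j * (j * star j) = j * (star j * j) * star j := by
            rw [mul_assoc, mul_assoc, mul_assoc]
        _ = j * (j * star j) * star j := by rw [hu]
        _ = j * j * (star j * star j) := by rw [mul_assoc, mul_assoc, mul_assoc]
        _ = 1 := by rw [hj2, hsj2]; simp
    rw [sub_mul, mul_sub, mul_sub, e1, hv2, mul_one, one_mul, mul_one]; abel
  have hssa : star (j * star j - 1) = j * star j - 1 := by
    rw [star_sub, star_mul, star_star, star_one]
  have h2 : 0 ≤ -(v * v) := by
    have := star_mul_self_nonneg (j * star j - 1); rwa [hssa, hs2] at this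
  have hvv0 : v * v = 0 := le_antisymm (by simpa using neg_nonneg.mp (by simpa using h2)) h1
  have hv0 : v = 0 := by
    have hn : ‖v‖ * ‖v‖ = 0 := by
      rw [← CStarRing.norm_star_mul_self, hvsa, hvv0, norm_zero]
    have : ‖v‖ = 0 := by nlinarith [norm_nonneg v]
    exact norm_eq_zero.mp this
  have hstarj : star j = -j := by
    have h : j + star j = 0 := hv0
    exact eq_neg_of_add_eq_zero_right h
  have hIa : Complex.I • a = j * a := by rw [hj, smul_mul_assoc, one_mul]
  have hIsa : j * star a = Complex.I • star a := by rw [hj, smul_mul_assoc, one_mul]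
  rw [hIa, star_mul, hstarj, mul_neg, ← hcomm (star a), hIsa]

lemma aux_star_smul (c : ℂ) (a : 𝒜) : star (c • a) = star c • star a := by
  have hc : c = (c.re : ℂ) + (c.im : ℂ) * Complex.I := (Complex.re_add_im c).symm
  have hsc : star c = (c.re : ℂ) - (c.im : ℂ) * Complex.I := by
    rw [Complex.star_def]
    nth_rewrite 1 [hc]
    rw [map_add, map_mul, Complex.conj_ofReal, Complex.conj_ofReal, Complex.conj_I]
    ring
  rw [hsc]
  nth_rewrite 1 [hc]
  rw [add_smul, star_add, mul_smul, aux_star_real_smul, aux_star_real_smul, aux_star_I_smul,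
    sub_smul, mul_smul, smul_neg]
  abel

end StarModuleDeriv

section CStarAux

variable {A : Type*} [CStarAlgebra A] [PartialOrder A] [StarOrderedRing A]

lemma aux_rsmul_nonneg {t : ℝ} (ht : 0 ≤ t) {a : A} (ha : 0 ≤ a) : 0 ≤ t • a := by
  rw [StarOrderedRing.nonneg_iff] at ha ⊢
  refine AddSubmonoid.closure_induction (fun x hx => ?_) ?_ (fun x y _ _ px py => ?_) ha
  · obtain ⟨s, rfl⟩ := hx
    have : t • (star s * s) = star (Real.sqrt t • s) * (Real.sqrt t • s) := by
      rw [star_smul, star_trivial (Real.sqrt t), smul_mul_assoc, mul_smul_comm, smul_smul,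
        Real.mul_self_sqrt ht]
    rw [this]
    exact AddSubmonoid.subset_closure ⟨_, rfl⟩
  · rw [smul_zero]; exact zero_mem _
  · rw [smul_add]; exact add_mem px py

lemma aux_rsmul_mono {t : ℝ} (ht : 0 ≤ t) {a b : A} (h : a ≤ b) : t • a ≤ t • b := by
  have h2 := aux_rsmul_nonneg ht (sub_nonneg.mpr h)
  rw [smul_sub] at h2
  exact sub_nonneg.mp h2

lemma aux_integral_nonneg {Ω : Type*} [MeasurableSpace Ω] {μ : Measure Ω} {h : Ω → A}
    (hint : Integrable h μ) (h0 : ∀ᵐ ω ∂μ, 0 ≤ h ω) : 0 ≤ ∫ ω, h ω ∂μ := by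
  by_contra hc
  have hconv : Convex ℝ {a : A | 0 ≤ a} := fun x hx y hy s t hs ht _ =>
    add_nonneg (aux_rsmul_nonneg hs hx) (aux_rsmul_nonneg ht hy)
  obtain ⟨φ, u, hφ1, hφ2⟩ :=
    geometric_hahn_banach_closed_point hconv CStarAlgebra.isClosed_nonneg hc
  have hu0 : 0 < u := by simpa using hφ1 0 (le_refl (0 : A))
  have hnonpos : ∀ b : A, 0 ≤ b → φ b ≤ 0 := by
    intro b hb
    by_contra hpos
    push_neg at hpos
    have ht : 0 ≤ u / φ b := le_of_lt (div_pos hu0 hpos)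
    have hmem : (0 : A) ≤ (u / φ b) • b := aux_rsmul_nonneg ht hb
    have := hφ1 _ hmem
    rw [_root_.map_smul, smul_eq_mul, div_mul_cancel₀ u (ne_of_gt hpos)] at this
    exact lt_irrefl u this
  have hle : φ (∫ ω, h ω ∂μ) ≤ 0 := by
    rw [← ContinuousLinearMap.integral_comp_comm φ hint]
    refine integral_nonpos_of_ae ?_
    filter_upwards [h0] with ω hω
    exact hnonpos _ hω
  exact absurd hφ2 (not_lt.mpr (hle.trans hu0.le))

end CStarAux

lemma aux_expand {𝒜 : Type*} [NormedRing 𝒜] [StarRing 𝒜] [NormedAlgebra ℂ 𝒜]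
    [StarModule ℂ 𝒜] (μc : ℂ) (a b d : 𝒜) :
    star ((star μc • star a) * d - b) * ((star μc • star a) * d - b)
      = star d * (((μc * star μc) • (a * star a)) * d) - star d * (μc • (a * b))
        - star (star d * (μc • (a * b))) + star b * b := by
  simp only [star_sub, star_mul, star_smul, star_star, sub_mul, mul_sub, smul_mul_assoc,
    mul_smul_comm, smul_smul, mul_assoc, smul_add, smul_sub, smul_neg, neg_smul, mul_comm (star μc) μc]
  abel

/-- The continuous biframe Bessel multiplier `M_{m,X,Y}` is well defined and
bounded, with `‖M_{m,X,Y}‖ ≤ ‖m‖_∞ · √(D₁ D₂)`. -/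
theorem bessel_multiplier_bounded
    {𝒜 H Ω : Type*}
    -- `𝒜` is a unital C*-algebra
    [NormedRing 𝒜] [StarRing 𝒜] [CStarRing 𝒜] [NormedAlgebra ℂ 𝒜] [CompleteSpace 𝒜]
    [PartialOrder 𝒜] [StarOrderedRing 𝒜]
    -- `H` is a Hilbert C*-module over `𝒜`
    [NormedAddCommGroup H] [NormedSpace ℝ H] [CompleteSpace H] [Module 𝒜 H]
    (inn : H → H → 𝒜)
    (inn_add_left : ∀ x y z : H, inn (x + y) z = inn x z + inn y z)
    (inn_smul_left : ∀ (a : 𝒜) (x z : H), inn (a • x) z = a * inn x z)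
    (inn_conj_symm : ∀ x y : H, inn x y = star (inn y x))
    (inn_nonneg : ∀ x : H, 0 ≤ inn x x)
    (inn_definite : ∀ x : H, inn x x = 0 → x = 0)
    (hnorm : ∀ x : H, ‖x‖ = Real.sqrt ‖inn x x‖)
    -- `(Ω, μ)` is a measure space
    [MeasurableSpace Ω] (μ : Measure Ω)
    -- `X, Y : Ω → H` are weakly measurable
    (X Y : Ω → H)
    (hXw : ∀ f : H, AEStronglyMeasurable (fun ω => inn f (X ω)) μ)
    (hYw : ∀ f : H, AEStronglyMeasurable (fun ω => inn f (Y ω)) μ)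
    -- `(X, X)` and `(Y, Y)` are continuous biframe Bessel mappings with bounds `D₁, D₂`
    (D₁ D₂ : ℝ) (hD₁ : 0 < D₁) (hD₂ : 0 < D₂)
    (hXBessel : ∀ f : H, ∫ ω, inn f (X ω) * inn (X ω) f ∂μ ≤ D₁ • inn f f)
    (hYBessel : ∀ f : H, ∫ ω, inn f (Y ω) * inn (Y ω) f ∂μ ≤ D₂ • inn f f)
    -- `m : Ω → ℂ` is an essentially bounded measurable function
    (m : Ω → ℂ) (hm : AEStronglyMeasurable m μ) (hmbd : eLpNormEssSup m μ ≠ ⊤)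
    -- all relevant integrands are Bochner integrable
    (hprodX : ∀ f : H, Integrable (fun ω => inn f (X ω) * inn (X ω) f) μ)
    (hprodY : ∀ f : H, Integrable (fun ω => inn f (Y ω) * inn (Y ω) f) μ)
    (hmint : ∀ f g : H, Integrable (fun ω => m ω • (inn f (X ω) * inn (Y ω) g)) μ)
    -- the continuous biframe Bessel multiplier `M_{m,X,Y}` (weakly defined)
    (M : H → H)
    (hM : ∀ f g : H, inn (M f) g = ∫ ω, m ω • (inn f (X ω) * inn (Y ω) g) ∂μ) :
    (∀ f g : H,
      ‖∫ ω, m ω • (inn f (X ω) * inn (Y ω) g) ∂μ‖ ≤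
        (eLpNormEssSup m μ).toReal * Real.sqrt (D₁ * D₂) * ‖f‖ * ‖g‖) ∧
    (∀ f : H, ‖M f‖ ≤ (eLpNormEssSup m μ).toReal * Real.sqrt (D₁ * D₂) * ‖f‖) := by
  letI hSM : StarModule ℂ 𝒜 := ⟨aux_star_smul⟩
  letI inst𝒜 : CStarAlgebra 𝒜 :=
    { ‹NormedRing 𝒜›, ‹StarRing 𝒜›, ‹CompleteSpace 𝒜›, ‹CStarRing 𝒜›,
      ‹NormedAlgebra ℂ 𝒜›, hSM with }
  have hMc0 : 0 ≤ (eLpNormEssSup m μ).toReal := ENNReal.toReal_nonneg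
  have hstar_inn : ∀ x y : H, star (inn x y) = inn y x := fun x y => by
    rw [inn_conj_symm x y, star_star]
  have hsq : ∀ x : H, ‖inn x x‖ = ‖x‖ ^ 2 := fun x => by
    rw [hnorm x, Real.sq_sqrt (norm_nonneg _)]
  have hmae : ∀ᵐ ω ∂μ, ‖m ω‖ ≤ (eLpNormEssSup m μ).toReal := by
    filter_upwards [ae_le_eLpNormEssSup (f := m) (μ := μ)] with ω hω
    have := ENNReal.toReal_mono hmbd hω
    simpa using this
  have hmain : ∀ f g : H,
      ‖∫ ω, m ω • (inn f (X ω) * inn (Y ω) g) ∂μ‖ ≤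
        (eLpNormEssSup m μ).toReal * Real.sqrt (D₁ * D₂) * ‖f‖ * ‖g‖ := by
    intro f g
    set Mc : ℝ := (eLpNormEssSup m μ).toReal with hMcdef
    set p : Ω → 𝒜 := fun ω => inn f (X ω) * inn (X ω) f with hp
    set q : Ω → 𝒜 := fun ω => inn g (Y ω) * inn (Y ω) g with hq
    set k : Ω → 𝒜 := fun ω => m ω • (inn f (X ω) * inn (Y ω) g) with hk
    set Aw : Ω → 𝒜 := fun ω => (m ω * star (m ω)) • p ω with hAw
    have hp0 : ∀ ω, 0 ≤ p ω := fun ω => by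
      rw [hp]; dsimp only; rw [← hstar_inn (X ω) f]; exact star_mul_self_nonneg _
    have hq0 : ∀ ω, 0 ≤ q ω := fun ω => by
      rw [hq]; dsimp only; rw [← hstar_inn (Y ω) g]; exact star_mul_self_nonneg _
    have hAwr : ∀ ω, Aw ω = (‖m ω‖ ^ 2 : ℝ) • p ω := fun ω => by
      have hms : m ω * star (m ω) = ((‖m ω‖ ^ 2 : ℝ) : ℂ) := by
        rw [Complex.star_def, Complex.mul_conj, Complex.normSq_eq_norm_sq]
      rw [hAw]; dsimp only; rw [hms, Complex.coe_smul]
    have hAw0 : ∀ ω, 0 ≤ Aw ω := fun ω => by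
      rw [hAwr ω]; exact aux_rsmul_nonneg (sq_nonneg _) (hp0 ω)
    have hφaesm : AEStronglyMeasurable (fun ω => m ω * star (m ω)) μ :=
      hm.mul (continuous_star.comp_aestronglyMeasurable hm)
    have hφtop : MemLp (fun ω => m ω * star (m ω)) ⊤ μ := by
      refine memLp_top_of_bound hφaesm (Mc * Mc) ?_
      filter_upwards [hmae] with ω hω
      rw [norm_mul, norm_star]
      exact mul_le_mul hω hω (norm_nonneg _) hMc0
    have hAint : Integrable Aw μ := by
      have := (hprodX f).smul_of_top_right hφtop
      exact this
    have hkint := hmint f g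
    have hqint := hprodY g
    set P : 𝒜 := ∫ ω, Aw ω ∂μ with hPdef
    set Q : 𝒜 := ∫ ω, q ω ∂μ with hQdef
    have hQ0 : 0 ≤ Q := aux_integral_nonneg hqint (Filter.Eventually.of_forall hq0)
    have hP0 : 0 ≤ P := aux_integral_nonneg hAint (Filter.Eventually.of_forall hAw0)
    have hPsa : IsSelfAdjoint P := IsSelfAdjoint.of_nonneg hP0
    have hsmulint : Integrable (fun ω => (Mc ^ 2 : ℝ) • p ω) μ := (hprodX f).smul (Mc ^ 2)
    have hPle : P ≤ (Mc ^ 2 * D₁) • inn f f := by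
      have hdiff : 0 ≤ ∫ ω, ((Mc ^ 2 : ℝ) • p ω - Aw ω) ∂μ := by
        refine aux_integral_nonneg (hsmulint.sub hAint) ?_
        filter_upwards [hmae] with ω hω
        rw [hAwr ω, ← sub_smul, sub_nonneg.symm]
        rw [sub_nonneg]
        exact aux_rsmul_nonneg (by nlinarith [norm_nonneg (m ω)]) (hp0 ω)
      rw [integral_sub hsmulint hAint, integral_smul] at hdiff
      have h1 : P ≤ (Mc ^ 2 : ℝ) • ∫ ω, p ω ∂μ := sub_nonneg.mp hdiff
      have h2 : (Mc ^ 2 : ℝ) • (∫ ω, p ω ∂μ) ≤ (Mc ^ 2 : ℝ) • (D₁ • inn f f) :=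
        aux_rsmul_mono (sq_nonneg _) (hXBessel f)
      calc P ≤ _ := h1
        _ ≤ (Mc ^ 2 : ℝ) • (D₁ • inn f f) := h2
        _ = (Mc ^ 2 * D₁) • inn f f := smul_smul _ _ _
    have hQle : Q ≤ D₂ • inn g g := hYBessel g
    have hPnorm : ‖P‖ ≤ Mc ^ 2 * D₁ * ‖f‖ ^ 2 := by
      refine le_trans (CStarAlgebra.norm_le_norm_of_nonneg_of_le hP0 hPle) ?_
      rw [norm_smul, Real.norm_eq_abs, abs_of_nonneg (by positivity), hsq f]
    have hQnorm : ‖Q‖ ≤ D₂ * ‖g‖ ^ 2 := by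
      refine le_trans (CStarAlgebra.norm_le_norm_of_nonneg_of_le hQ0 hQle) ?_
      rw [norm_smul, Real.norm_eq_abs, abs_of_nonneg hD₂.le, hsq g]
    set c : 𝒜 := ∫ ω, k ω ∂μ with hcdef
    have hkey : ∀ d : 𝒜, 0 ≤ star d * (P * d) - star d * c - star c * d + Q := by
      intro d
      have hL1a : ∀ x : 𝒜,
          ((ContinuousLinearMap.mul ℂ 𝒜 (star d)).comp
            ((ContinuousLinearMap.mul ℂ 𝒜).flip d)) x = star d * (x * d) := fun x => rfl
      have hL2a : ∀ x : 𝒜, (ContinuousLinearMap.mul ℂ 𝒜 (star d)) x = star d * x :=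
        fun x => rfl
      set w : Ω → 𝒜 := fun ω => (star (m ω) • inn (X ω) f) * d - inn (Y ω) g with hw
      have hid : ∀ ω, star (w ω) * w ω
          = star d * (Aw ω * d) - star d * k ω - star (star d * k ω) + q ω := by
        intro ω
        have hexp := aux_expand (m ω) (inn f (X ω)) (inn (Y ω) g) d
        simp only [hstar_inn] at hexp
        simp only [hw, hAw, hk, hq, hp]
        exact hexp
      have I1 : Integrable (fun ω => star d * (Aw ω * d)) μ := by
        have := ContinuousLinearMap.integrable_comp
          ((ContinuousLinearMap.mul ℂ 𝒜 (star d)).comp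
            ((ContinuousLinearMap.mul ℂ 𝒜).flip d)) hAint
        simpa only [hL1a] using this
      have I2 : Integrable (fun ω => star d * k ω) μ := by
        have := ContinuousLinearMap.integrable_comp (ContinuousLinearMap.mul ℂ 𝒜 (star d)) hkint
        simpa only [hL2a] using this
      have I3 : Integrable (fun ω => star (star d * k ω)) μ := by
        have := ContinuousLinearMap.integrable_comp
          ((starL' ℝ : 𝒜 ≃L[ℝ] 𝒜).toContinuousLinearMap) I2
        simpa using this
      have hGint : Integrable (fun ω => star (w ω) * w ω) μ :=
        (((I1.sub I2).sub I3).add hqint).congr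
          (Filter.Eventually.of_forall fun ω => (hid ω).symm)
      have hnn : 0 ≤ ∫ ω, star (w ω) * w ω ∂μ :=
        aux_integral_nonneg hGint
          (Filter.Eventually.of_forall fun ω => star_mul_self_nonneg _)
      have hsplit : ∫ ω, star (w ω) * w ω ∂μ
          = star d * (P * d) - star d * c - star (star d * c) + Q := by
        have I12 : Integrable (fun ω => star d * (Aw ω * d) - star d * k ω) μ := I1.sub I2
        have I123 : Integrable
            (fun ω => star d * (Aw ω * d) - star d * k ω - star (star d * k ω)) μ := I12.sub I3
        rw [integral_congr_ae (Filter.Eventually.of_forall hid)]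
        rw [integral_add I123 hqint, integral_sub I12 I3, integral_sub I1 I2]
        have e1 : ∫ ω, star d * (Aw ω * d) ∂μ = star d * (P * d) := by
          have := ContinuousLinearMap.integral_comp_comm
            ((ContinuousLinearMap.mul ℂ 𝒜 (star d)).comp
              ((ContinuousLinearMap.mul ℂ 𝒜).flip d)) hAint
          simpa only [hL1a, ← hPdef] using this
        have e2 : ∫ ω, star d * k ω ∂μ = star d * c := by
          have := ContinuousLinearMap.integral_comp_comm
            (ContinuousLinearMap.mul ℂ 𝒜 (star d)) hkint
          simpa only [hL2a, ← hcdef] using this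
        have e3 : ∫ ω, star (star d * k ω) ∂μ = star (star d * c) := by
          have h3 := ContinuousLinearEquiv.integral_comp_comm (starL' ℝ : 𝒜 ≃L[ℝ] 𝒜) (μ := μ)
            (fun ω => star d * k ω)
          simp only [starL'_apply] at h3
          rw [e2] at h3
          exact h3
        rw [e1, e2, e3]
      rw [hsplit] at hnn
      rwa [star_mul, star_star] at hnn
    have hcc0 : 0 ≤ star c * c := star_mul_self_nonneg c
    have hstep : ∀ ε : ℝ, 0 < ε → ‖star c * c‖ ≤ (‖P‖ + ε) * ‖Q‖ := by
      intro ε hε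
      have hPε : 0 < ‖P‖ + ε := by positivity
      set t : ℝ := (‖P‖ + ε)⁻¹ with htdef
      have ht0 : 0 < t := inv_pos.mpr hPε
      have h := hkey (t • c)
      have hsd : star (t • c) = t • star c := by rw [star_smul, star_trivial t]
      rw [hsd] at h
      have e1 : t • star c * (P * (t • c)) = (t * t) • (star c * (P * c)) := by
        rw [smul_mul_assoc, mul_smul_comm, mul_smul_comm, smul_smul]
      have e2 : t • star c * c = t • (star c * c) := smul_mul_assoc t _ _
      have e3 : star c * (t • c) = t • (star c * c) := mul_smul_comm t _ _
      rw [e1, e2, e3] at h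
      have hconj : star c * (P * c) ≤ ‖P‖ • (star c * c) := by
        have := CStarAlgebra.star_left_conjugate_le_norm_smul (a := c) (b := P) hPsa
        rwa [mul_assoc] at this
      have h4 : (t * t) • (star c * (P * c)) ≤ (t * t * ‖P‖) • (star c * c) := by
        have := aux_rsmul_mono (mul_self_nonneg t) hconj
        rwa [smul_smul] at this
      have h5 : 0 ≤ (t * t * ‖P‖) • (star c * c) - t • (star c * c) - t • (star c * c) + Q :=
        le_trans h (add_le_add_left (sub_le_sub_right (sub_le_sub_right h4 _) _) _)
      have h6 : (t + t - t * t * ‖P‖) • (star c * c) ≤ Q := by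
        rw [sub_smul, add_smul]
        calc t • (star c * c) + t • (star c * c) - (t * t * ‖P‖) • (star c * c)
            ≤ t • (star c * c) + t • (star c * c) - (t * t * ‖P‖) • (star c * c) +
              ((t * t * ‖P‖) • (star c * c) - t • (star c * c) - t • (star c * c) + Q) :=
              le_add_of_nonneg_right h5
          _ = Q := by abel
      have htP : t * ‖P‖ ≤ 1 := by
        calc t * ‖P‖ ≤ t * (‖P‖ + ε) := by nlinarith [ht0.le]
          _ = 1 := inv_mul_cancel₀ hPε.ne'
      have h7 : t • (star c * c) ≤ Q := by
        refine le_trans ?_ h6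
        have hcoef : 0 ≤ (t + t - t * t * ‖P‖) - t := by nlinarith [ht0.le]
        have h8 := aux_rsmul_nonneg hcoef hcc0
        rw [sub_smul] at h8
        exact sub_nonneg.mp h8
      have h8 : ‖t • (star c * c)‖ ≤ ‖Q‖ :=
        CStarAlgebra.norm_le_norm_of_nonneg_of_le (aux_rsmul_nonneg ht0.le hcc0) h7
      rw [norm_smul, Real.norm_eq_abs, abs_of_pos ht0] at h8
      calc ‖star c * c‖ = (‖P‖ + ε) * (t * ‖star c * c‖) := by
            rw [htdef, ← mul_assoc, mul_inv_cancel₀ hPε.ne', one_mul]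
        _ ≤ (‖P‖ + ε) * ‖Q‖ := mul_le_mul_of_nonneg_left h8 hPε.le
    have hccPQ : ‖star c * c‖ ≤ ‖P‖ * ‖Q‖ := by
      by_contra hlt
      push_neg at hlt
      have hQn : 0 ≤ ‖Q‖ := norm_nonneg _
      set ε : ℝ := (‖star c * c‖ - ‖P‖ * ‖Q‖) / (‖Q‖ + 1) with hεdef
      have hε0 : 0 < ε := div_pos (by linarith) (by linarith)
      have hb := hstep ε hε0
      have hεm : ε * (‖Q‖ + 1) = ‖star c * c‖ - ‖P‖ * ‖Q‖ :=
        div_mul_cancel₀ _ (by linarith)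
      nlinarith [hb, hεm, hQn, hε0]
    have hcnorm : ‖c‖ ^ 2 ≤ ‖P‖ * ‖Q‖ := by
      rw [sq, ← CStarRing.norm_star_mul_self]
      exact hccPQ
    have hRHS0 : 0 ≤ Mc * Real.sqrt (D₁ * D₂) * ‖f‖ * ‖g‖ := by positivity
    have hsqbound : ‖c‖ ^ 2 ≤ (Mc * Real.sqrt (D₁ * D₂) * ‖f‖ * ‖g‖) ^ 2 := by
      have h9 : ‖P‖ * ‖Q‖ ≤ (Mc ^ 2 * D₁ * ‖f‖ ^ 2) * (D₂ * ‖g‖ ^ 2) :=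
        mul_le_mul hPnorm hQnorm (norm_nonneg _) (by positivity)
      have hsq2 : Real.sqrt (D₁ * D₂) ^ 2 = D₁ * D₂ := Real.sq_sqrt (by positivity)
      have h10 : (Mc * Real.sqrt (D₁ * D₂) * ‖f‖ * ‖g‖) ^ 2 =
          (Mc ^ 2 * D₁ * ‖f‖ ^ 2) * (D₂ * ‖g‖ ^ 2) := by
        rw [mul_pow, mul_pow, mul_pow, hsq2]; ring
      rw [h10]
      exact le_trans hcnorm h9
    calc ‖c‖ = Real.sqrt (‖c‖ ^ 2) := (Real.sqrt_sq (norm_nonneg _)).symm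
      _ ≤ Real.sqrt ((Mc * Real.sqrt (D₁ * D₂) * ‖f‖ * ‖g‖) ^ 2) := Real.sqrt_le_sqrt hsqbound
      _ = Mc * Real.sqrt (D₁ * D₂) * ‖f‖ * ‖g‖ := Real.sqrt_sq hRHS0
  refine ⟨hmain, fun f => ?_⟩
  have h2 := hmain f (M f)
  have hRHS : 0 ≤ (eLpNormEssSup m μ).toReal * Real.sqrt (D₁ * D₂) * ‖f‖ := by positivity
  have hMf2 : ‖M f‖ ^ 2 ≤
      (eLpNormEssSup m μ).toReal * Real.sqrt (D₁ * D₂) * ‖f‖ * ‖M f‖ := by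
    calc ‖M f‖ ^ 2 = ‖inn (M f) (M f)‖ := (hsq (M f)).symm
      _ = ‖∫ ω, m ω • (inn f (X ω) * inn (Y ω) (M f)) ∂μ‖ := by rw [hM f (M f)]
      _ ≤ _ := h2
  nlinarith [norm_nonneg (M f), hRHS]
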